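/- (Rademacher complexity for ℓ∞-bounded dictionary regressors) In the setting of the previous statement, with F_{B,∞} the class of cell-constant functions with max_i |f(Kᵢ)| ≤ B and a λ-Lipschitz loss Λ(y f(x)), the empirical Rademacher complexity satisfies R(F_{B,∞}, S) ≤ (λB/N) ∑ᵢ₌₁^K √Nᵢ. -/

import Mathlib

open Finset

/-- `±1` value of a `Bool`. -/
def radR (b : Bool) : ℝ := if b then 1 else -1

lemma radR_abs (b : Bool) : |radR b| = 1 := by cases b <;> simp [radR]

lemma radR_not (b : Bool) : radR (!b) = - radR b := by cases b <;> simp [radR]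

lemma radR_mul_self (b : Bool) : radR b * radR b = 1 := by cases b <;> norm_num [radR]

lemma bddAbove_range_of_le {G : Type*} {f : G → ℝ} {M : ℝ} (h : ∀ g, f g ≤ M) :
    BddAbove (Set.range f) := ⟨M, by rintro _ ⟨g, rfl⟩; exact h g⟩

lemma ciSup_add_ciSup_le' {G : Type*} [Nonempty G] {X Y : G → ℝ} {C : ℝ}
    (h : ∀ g g', X g + Y g' ≤ C) : (⨆ g, X g) + (⨆ g, Y g) ≤ C := by
  have hY : ∀ g, (⨆ g', Y g') ≤ C - X g := fun g =>
    ciSup_le fun g' => by linarith [h g g']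
  have hX : (⨆ g, X g) ≤ C - ⨆ g', Y g' :=
    ciSup_le fun g => by linarith [hY g]
  linarith

lemma key_sup {G : Type*} [Nonempty G] (A p q : G → ℝ)
    (hpq : ∀ x y, |p x - p y| ≤ |q x - q y|)
    (M : ℝ) (hA : ∀ g, |A g| ≤ M) (hq : ∀ g, |q g| ≤ M) :
    (⨆ g, A g + p g) + (⨆ g, A g - p g) ≤ (⨆ g, A g + q g) + (⨆ g, A g - q g) := by
  have hb1 : BddAbove (Set.range fun g => A g + q g) :=
    bddAbove_range_of_le (M := M + M) fun g => by
      have := abs_le.1 (hA g); have := abs_le.1 (hq g); linarith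
  have hb2 : BddAbove (Set.range fun g => A g - q g) :=
    bddAbove_range_of_le (M := M + M) fun g => by
      have := abs_le.1 (hA g); have := abs_le.1 (hq g); linarith
  apply ciSup_add_ciSup_le'
  intro g g'
  have h1 := hpq g g'
  rcases le_or_gt (q g') (q g) with hc | hc
  · have h2 : p g - p g' ≤ q g - q g' := by
      calc p g - p g' ≤ |p g - p g'| := le_abs_self _
        _ ≤ |q g - q g'| := h1
        _ = q g - q g' := abs_of_nonneg (by linarith)
    have h3 : A g + q g ≤ ⨆ g, A g + q g := le_ciSup hb1 g
    have h4 : A g' - q g' ≤ ⨆ g, A g - q g := le_ciSup hb2 g'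
    linarith
  · have h2 : p g - p g' ≤ q g' - q g := by
      calc p g - p g' ≤ |p g - p g'| := le_abs_self _
        _ ≤ |q g - q g'| := h1
        _ = q g' - q g := by rw [abs_of_nonpos (by linarith)]; ring
    have h3 : A g' + q g' ≤ ⨆ g, A g + q g := le_ciSup hb1 g'
    have h4 : A g - q g ≤ ⨆ g, A g - q g := le_ciSup hb2 g
    linarith

lemma key_sup_signed {G : Type*} [Nonempty G] (A p q : G → ℝ)
    (hpq : ∀ x y, |p x - p y| ≤ |q x - q y|)
    (M : ℝ) (hA : ∀ g, |A g| ≤ M) (hq : ∀ g, |q g| ≤ M)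
    (s : ℝ) (hs : s = 1 ∨ s = -1) :
    (⨆ g, A g + s * p g) + (⨆ g, A g + (-s) * p g)
      ≤ (⨆ g, A g + s * q g) + (⨆ g, A g + (-s) * q g) := by
  rcases hs with rfl | rfl
  · simpa [one_mul, neg_one_mul, ← sub_eq_add_neg] using key_sup A p q hpq M hA hq
  · have h' : ∀ x y, |(-p x) - (-p y)| ≤ |(-q x) - (-q y)| := fun x y => by
      rw [show -p x - -p y = -(p x - p y) by ring,
        show -q x - -q y = -(q x - q y) by ring, abs_neg, abs_neg]
      exact hpq x y
    have hq' : ∀ g, |(-q g)| ≤ M := fun g => by rw [abs_neg]; exact hq g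
    have := key_sup A (fun g => -p g) (fun g => -q g) h' M hA hq'
    simpa [neg_one_mul, neg_neg, one_mul, sub_neg_eq_add, ← sub_eq_add_neg] using this

lemma contraction_step {N : ℕ} {G : Type*} [Nonempty G] (u v : Fin N → G → ℝ) (k : Fin N)
    (huv : ∀ n, n ≠ k → u n = v n)
    (hpq : ∀ x y, |u k x - u k y| ≤ |v k x - v k y|)
    (M : ℝ) (hu : ∀ n g, |u n g| ≤ M) (hv : ∀ n g, |v n g| ≤ M) :
    ∑ σ : Fin N → Bool, (⨆ g, ∑ n, radR (σ n) * u n g)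
      ≤ ∑ σ : Fin N → Bool, ⨆ g, ∑ n, radR (σ n) * v n g := by
  have hM : 0 ≤ M := le_trans (abs_nonneg _) (hu k (Classical.arbitrary G))
  set flip : (Fin N → Bool) → (Fin N → Bool) := fun σ => Function.update σ k (!σ k) with hflipdef
  have hflip_k : ∀ σ, flip σ k = !σ k := fun σ => Function.update_self _ _ _
  have hflip_ne : ∀ σ n, n ≠ k → flip σ n = σ n := fun σ n hn => Function.update_of_ne hn _ _
  have hinv : Function.Involutive flip := by
    intro σ; funext j
    rcases eq_or_ne j k with rfl | hj
    · rw [hflip_k, hflip_k, Bool.not_not]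
    · rw [hflip_ne _ _ hj, hflip_ne _ _ hj]
  have hsum : ∀ f : (Fin N → Bool) → ℝ, ∑ σ, f (flip σ) = ∑ σ, f σ := fun f =>
    Equiv.sum_comp (Function.Involutive.toPerm flip hinv) f
  -- pointwise inequality
  have ptwise : ∀ σ : Fin N → Bool,
      (⨆ g, ∑ n, radR (σ n) * u n g) + (⨆ g, ∑ n, radR (flip σ n) * u n g)
        ≤ (⨆ g, ∑ n, radR (σ n) * v n g) + (⨆ g, ∑ n, radR (flip σ n) * v n g) := by
    intro σ
    set A : G → ℝ := fun g => ∑ n ∈ univ.erase k, radR (σ n) * u n g with hAdef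
    have hAv : ∀ g, ∑ n ∈ univ.erase k, radR (σ n) * v n g = A g := fun g =>
      Finset.sum_congr rfl fun n hn => by rw [huv n (Finset.ne_of_mem_erase hn)]
    have split : ∀ (w : Fin N → G → ℝ) (τ : Fin N → Bool) (g : G),
        ∑ n, radR (τ n) * w n g
          = (∑ n ∈ univ.erase k, radR (τ n) * w n g) + radR (τ k) * w k g := by
      intro w τ g
      rw [Finset.sum_erase_add _ _ (Finset.mem_univ k)]
    have eflip : ∀ (w : Fin N → G → ℝ) (g : G),
        ∑ n ∈ univ.erase k, radR (flip σ n) * w n g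
          = ∑ n ∈ univ.erase k, radR (σ n) * w n g := by
      intro w g
      exact Finset.sum_congr rfl fun n hn => by
        rw [hflip_ne _ _ (Finset.ne_of_mem_erase hn)]
    have e1 : (⨆ g, ∑ n, radR (σ n) * u n g) = ⨆ g, A g + radR (σ k) * u k g := by
      congr 1; funext g; rw [split u σ g]
    have e2 : (⨆ g, ∑ n, radR (flip σ n) * u n g)
        = ⨆ g, A g + (-(radR (σ k))) * u k g := by
      congr 1; funext g
      rw [split u (flip σ) g, eflip u g, hflip_k, radR_not]
    have e3 : (⨆ g, ∑ n, radR (σ n) * v n g) = ⨆ g, A g + radR (σ k) * v k g := by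
      congr 1; funext g
      rw [split v σ g, hAv g]
    have e4 : (⨆ g, ∑ n, radR (flip σ n) * v n g)
        = ⨆ g, A g + (-(radR (σ k))) * v k g := by
      congr 1; funext g
      rw [split v (flip σ) g, eflip v g, hflip_k, radR_not, hAv g]
    rw [e1, e2, e3, e4]
    have hAbd : ∀ g, |A g| ≤ (N : ℝ) * M := by
      intro g
      calc |A g| ≤ ∑ n ∈ univ.erase k, |radR (σ n) * u n g| :=
            Finset.abs_sum_le_sum_abs _ _
        _ ≤ ∑ n ∈ univ.erase k, M := Finset.sum_le_sum fun n _ => by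
            rw [abs_mul, radR_abs, one_mul]; exact hu n g
        _ = ((univ.erase k).card : ℝ) * M := by rw [Finset.sum_const, nsmul_eq_mul]
        _ ≤ (N : ℝ) * M := by
            apply mul_le_mul_of_nonneg_right _ hM
            have h1 : (univ.erase k).card ≤ (univ : Finset (Fin N)).card :=
              Finset.card_erase_le
            have h2 : (univ : Finset (Fin N)).card = N := by simp
            exact_mod_cast h2 ▸ h1
    have hvk : ∀ g, |v k g| ≤ (N : ℝ) * M := by
      intro g
      have hN1 : (1 : ℝ) ≤ (N : ℝ) := by
        have : 0 < N := k.pos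
        exact_mod_cast this
      calc |v k g| ≤ M := hv k g
        _ = 1 * M := (one_mul M).symm
        _ ≤ (N : ℝ) * M := mul_le_mul_of_nonneg_right hN1 hM
    exact key_sup_signed A (u k) (v k) hpq ((N : ℝ) * M) hAbd hvk (radR (σ k))
      (by cases σ k <;> simp [radR])
  have two_mul_ineq :
      (∑ σ : Fin N → Bool, ⨆ g, ∑ n, radR (σ n) * u n g)
        + (∑ σ : Fin N → Bool, ⨆ g, ∑ n, radR (σ n) * u n g)
      ≤ (∑ σ : Fin N → Bool, ⨆ g, ∑ n, radR (σ n) * v n g)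
        + (∑ σ : Fin N → Bool, ⨆ g, ∑ n, radR (σ n) * v n g) := by
    have lhs2 := hsum (fun σ => ⨆ g, ∑ n, radR (σ n) * u n g)
    have rhs2 := hsum (fun σ => ⨆ g, ∑ n, radR (σ n) * v n g)
    calc (∑ σ : Fin N → Bool, ⨆ g, ∑ n, radR (σ n) * u n g)
          + (∑ σ : Fin N → Bool, ⨆ g, ∑ n, radR (σ n) * u n g)
        = (∑ σ : Fin N → Bool, ⨆ g, ∑ n, radR (σ n) * u n g)
          + (∑ σ : Fin N → Bool, ⨆ g, ∑ n, radR (flip σ n) * u n g) := by rw [lhs2]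
      _ = ∑ σ : Fin N → Bool, ((⨆ g, ∑ n, radR (σ n) * u n g)
          + (⨆ g, ∑ n, radR (flip σ n) * u n g)) := (Finset.sum_add_distrib).symm
      _ ≤ ∑ σ : Fin N → Bool, ((⨆ g, ∑ n, radR (σ n) * v n g)
          + (⨆ g, ∑ n, radR (flip σ n) * v n g)) := Finset.sum_le_sum fun σ _ => ptwise σ
      _ = (∑ σ : Fin N → Bool, ⨆ g, ∑ n, radR (σ n) * v n g)
          + (∑ σ : Fin N → Bool, ⨆ g, ∑ n, radR (flip σ n) * v n g) := Finset.sum_add_distrib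
      _ = _ := by rw [rhs2]
  linarith

lemma contraction_main {N : ℕ} {G : Type*} [Nonempty G] (t : Fin N → G → ℝ)
    (Λ : ℝ → ℝ) (lam : ℝ) (hlam : 0 ≤ lam)
    (hlip : ∀ x y, |Λ x - Λ y| ≤ lam * |x - y|)
    (B : ℝ) (hB : 0 ≤ B) (ht : ∀ n g, |t n g| ≤ B) :
    ∑ σ : Fin N → Bool, (⨆ g, ∑ n, radR (σ n) * Λ (t n g))
      ≤ ∑ σ : Fin N → Bool, ⨆ g, ∑ n, radR (σ n) * (lam * t n g) := by
  classical
  set w : Finset (Fin N) → Fin N → G → ℝ :=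
    fun S n g => if n ∈ S then lam * t n g else Λ (t n g) with hwdef
  have hbd : ∀ S n g, |w S n g| ≤ |Λ 0| + lam * B := by
    intro S n g
    have htn := ht n g
    have hmul : lam * |t n g| ≤ lam * B := mul_le_mul_of_nonneg_left htn hlam
    by_cases h : n ∈ S <;> simp only [w, h, if_true, if_false]
    · rw [abs_mul, abs_of_nonneg hlam]
      have := abs_nonneg (Λ 0)
      linarith
    · have h1 : |Λ (t n g) - Λ 0| ≤ lam * |t n g - 0| := hlip (t n g) 0
      rw [sub_zero] at h1
      calc |Λ (t n g)| = |Λ (t n g) - Λ 0 + Λ 0| := by ring_nf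
        _ ≤ |Λ (t n g) - Λ 0| + |Λ 0| := abs_add_le _ _
        _ ≤ |Λ 0| + lam * B := by linarith
  have main : ∀ S : Finset (Fin N),
      ∑ σ : Fin N → Bool, (⨆ g, ∑ n, radR (σ n) * w ∅ n g)
        ≤ ∑ σ : Fin N → Bool, ⨆ g, ∑ n, radR (σ n) * w S n g := by
    intro S
    induction S using Finset.induction_on with
    | empty => exact le_rfl
    | @insert k S hk ih =>
      refine le_trans ih ?_
      apply contraction_step (w S) (w (insert k S)) k
      · intro n hn; funext g
        by_cases hnS : n ∈ S <;> simp [w, Finset.mem_insert, hn, hnS]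
      · intro x y
        simp only [w, if_pos (Finset.mem_insert_self k S), if_neg hk]
        calc |Λ (t k x) - Λ (t k y)| ≤ lam * |t k x - t k y| := hlip _ _
          _ = |lam * t k x - lam * t k y| := by
              rw [← mul_sub, abs_mul, abs_of_nonneg hlam]
      · exact hbd S
      · exact hbd (insert k S)
  have h := main univ
  have e1 : ∀ (σ : Fin N → Bool),
      (⨆ g : G, ∑ n, radR (σ n) * w ∅ n g) = ⨆ g : G, ∑ n, radR (σ n) * Λ (t n g) :=
    fun σ => iSup_congr fun g => Finset.sum_congr rfl fun n _ => by simp [w]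
  have e2 : ∀ (σ : Fin N → Bool),
      (⨆ g : G, ∑ n, radR (σ n) * w univ n g)
        = ⨆ g : G, ∑ n, radR (σ n) * (lam * t n g) :=
    fun σ => iSup_congr fun g => Finset.sum_congr rfl fun n _ => by simp [w]
  calc ∑ σ : Fin N → Bool, (⨆ g, ∑ n, radR (σ n) * Λ (t n g))
      = ∑ σ : Fin N → Bool, (⨆ g, ∑ n, radR (σ n) * w ∅ n g) :=
        Finset.sum_congr rfl fun σ _ => (e1 σ).symm
    _ ≤ ∑ σ : Fin N → Bool, ⨆ g, ∑ n, radR (σ n) * w univ n g := h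
    _ = _ := Finset.sum_congr rfl fun σ _ => e2 σ

lemma rad_orth {N : ℕ} {n m : Fin N} (h : n ≠ m) :
    ∑ σ : Fin N → Bool, radR (σ n) * radR (σ m) = 0 := by
  set flip : (Fin N → Bool) → (Fin N → Bool) := fun σ => Function.update σ n (!σ n)
  have hflip_n : ∀ σ, flip σ n = !σ n := fun σ => Function.update_self _ _ _
  have hflip_m : ∀ σ, flip σ m = σ m := fun σ => Function.update_of_ne h.symm _ _
  have hinv : Function.Involutive flip := by
    intro σ; funext j
    rcases eq_or_ne j n with rfl | hj
    · rw [hflip_n, hflip_n, Bool.not_not]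
    · have : ∀ τ : Fin N → Bool, flip τ j = τ j := fun τ => Function.update_of_ne hj _ _
      rw [this, this]
  have e := Equiv.sum_comp (Function.Involutive.toPerm flip hinv)
    (fun σ => radR (σ n) * radR (σ m))
  have e2 : ∑ σ : Fin N → Bool, radR (flip σ n) * radR (flip σ m)
      = - ∑ σ : Fin N → Bool, radR (σ n) * radR (σ m) := by
    rw [← Finset.sum_neg_distrib]
    exact Finset.sum_congr rfl fun σ _ => by rw [hflip_n, hflip_m, radR_not]; ring
  have e3 : ∑ σ : Fin N → Bool,
      (fun σ : Fin N → Bool => radR (σ n) * radR (σ m)) ((Function.Involutive.toPerm flip hinv) σ)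
      = ∑ σ : Fin N → Bool, radR (flip σ n) * radR (flip σ m) := rfl
  rw [e3, e2] at e
  linarith

lemma sum_one_eq {N : ℕ} : ∑ _σ : Fin N → Bool, (1 : ℝ) = 2 ^ N := by
  rw [Finset.sum_const, Finset.card_univ, nsmul_eq_mul, mul_one]
  simp [Fintype.card_fun]

lemma rad_sq_sum {N : ℕ} (A : Finset (Fin N)) (e : Fin N → ℝ) (he : ∀ n, e n * e n = 1) :
    ∑ σ : Fin N → Bool, (∑ n ∈ A, radR (σ n) * e n) ^ 2 = 2 ^ N * A.card := by
  have expand : ∀ σ : Fin N → Bool, (∑ n ∈ A, radR (σ n) * e n) ^ 2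
      = ∑ n ∈ A, ∑ m ∈ A, radR (σ n) * e n * (radR (σ m) * e m) := by
    intro σ; rw [sq, Finset.sum_mul_sum]
  have inner : ∀ n m : Fin N, ∑ σ : Fin N → Bool, radR (σ n) * e n * (radR (σ m) * e m)
      = if n = m then (2 : ℝ) ^ N else 0 := by
    intro n m
    rcases eq_or_ne n m with rfl | h
    · simp only [if_pos rfl]
      have h1 : ∀ σ : Fin N → Bool, radR (σ n) * e n * (radR (σ n) * e n) = 1 := by
        intro σ
        calc radR (σ n) * e n * (radR (σ n) * e n)
            = radR (σ n) * radR (σ n) * (e n * e n) := by ring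
          _ = 1 := by rw [radR_mul_self, he n, one_mul]
      rw [Finset.sum_congr rfl fun σ _ => h1 σ]
      exact sum_one_eq
    · simp only [if_neg h]
      have h1 : ∀ σ : Fin N → Bool, radR (σ n) * e n * (radR (σ m) * e m)
          = e n * e m * (radR (σ n) * radR (σ m)) := fun σ => by ring
      rw [Finset.sum_congr rfl fun σ _ => h1 σ, ← Finset.mul_sum, rad_orth h, mul_zero]
  calc ∑ σ : Fin N → Bool, (∑ n ∈ A, radR (σ n) * e n) ^ 2
      = ∑ σ : Fin N → Bool, ∑ n ∈ A, ∑ m ∈ A, radR (σ n) * e n * (radR (σ m) * e m) :=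
        Finset.sum_congr rfl fun σ _ => expand σ
    _ = ∑ n ∈ A, ∑ σ : Fin N → Bool, ∑ m ∈ A, radR (σ n) * e n * (radR (σ m) * e m) :=
        Finset.sum_comm
    _ = ∑ n ∈ A, ∑ m ∈ A, ∑ σ : Fin N → Bool, radR (σ n) * e n * (radR (σ m) * e m) :=
        Finset.sum_congr rfl fun n _ => Finset.sum_comm
    _ = ∑ n ∈ A, ∑ m ∈ A, if n = m then (2 : ℝ) ^ N else 0 :=
        Finset.sum_congr rfl fun n _ => Finset.sum_congr rfl fun m _ => inner n m
    _ = ∑ n ∈ A, (2 : ℝ) ^ N := Finset.sum_congr rfl fun n hn => by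
        rw [Finset.sum_ite_eq A n (fun _ => (2:ℝ)^N), if_pos hn]
    _ = 2 ^ N * A.card := by rw [Finset.sum_const, nsmul_eq_mul, mul_comm]

lemma rad_abs_sum {N : ℕ} (A : Finset (Fin N)) (e : Fin N → ℝ) (he : ∀ n, e n * e n = 1) :
    ∑ σ : Fin N → Bool, |∑ n ∈ A, radR (σ n) * e n| ≤ 2 ^ N * Real.sqrt A.card := by
  set X := fun σ : Fin N → Bool => |∑ n ∈ A, radR (σ n) * e n| with hX
  have hX0 : (0 : ℝ) ≤ ∑ σ, X σ := Finset.sum_nonneg fun σ _ => abs_nonneg _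
  have cs : (∑ σ, X σ) ^ 2 ≤ (∑ _σ : Fin N → Bool, (1:ℝ) ^ 2) * ∑ σ, X σ ^ 2 := by
    have h := Finset.sum_mul_sq_le_sq_mul_sq univ (fun _ : Fin N → Bool => (1:ℝ)) X
    simpa using h
  have h1 : (∑ _σ : Fin N → Bool, (1:ℝ) ^ 2) = 2 ^ N := by
    simpa using (sum_one_eq (N := N))
  have hsq : ∑ σ, X σ ^ 2 = 2 ^ N * A.card := by
    calc ∑ σ, X σ ^ 2 = ∑ σ : Fin N → Bool, (∑ n ∈ A, radR (σ n) * e n) ^ 2 :=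
          Finset.sum_congr rfl fun σ _ => sq_abs _
      _ = 2 ^ N * A.card := rad_sq_sum A e he
  have h2 : (∑ σ, X σ) ^ 2 ≤ ((2:ℝ) ^ N) ^ 2 * A.card := by
    rw [h1, hsq] at cs
    calc (∑ σ, X σ) ^ 2 ≤ 2 ^ N * (2 ^ N * A.card) := cs
      _ = ((2:ℝ) ^ N) ^ 2 * A.card := by ring
  have h3 : ∑ σ, X σ ≤ Real.sqrt (((2:ℝ) ^ N) ^ 2 * A.card) :=
    (Real.le_sqrt hX0 (by positivity)).2 h2
  calc ∑ σ, X σ ≤ Real.sqrt (((2:ℝ) ^ N) ^ 2 * A.card) := h3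
    _ = 2 ^ N * Real.sqrt A.card := by
        rw [Real.sqrt_mul (by positivity), Real.sqrt_sq (by positivity)]

/-- Empirical Rademacher complexity for `ℓ∞`-bounded dictionary regressors: with inputs
in `K` cells (the `n`-th sample lying in cell `c n` with label `y n` and `Nᵢ` samples in
cell `i`), the class `F_{B,∞}` of cell-constant real functions with `maxᵢ |f(Kᵢ)| ≤ B`,
and a loss `ℓ(f,x,y) = Λ(y f(x))` with `Λ` `λ`-Lipschitz, one has
`R(F_{B,∞},S) ≤ (λB/N) ∑ᵢ √Nᵢ`. -/
theorem rademacher_linf_dictionary {K N : ℕ} (hN : 0 < N)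
    (c : Fin N → Fin K) (y : Fin N → Bool)
    (Λ : ℝ → ℝ) (lam : NNReal) (hΛ : LipschitzWith lam Λ)
    (B : ℝ) (hB : 0 ≤ B) :
    ((2 : ℝ) ^ N)⁻¹ * ∑ σ : Fin N → Bool,
        (⨆ g : {g : Fin K → ℝ // ∀ i, |g i| ≤ B},
          (1 / N : ℝ) * ∑ n, radR (σ n) * Λ (radR (y n) * g.1 (c n)))
      ≤ ((lam : ℝ) * B / N) *
          ∑ i : Fin K, Real.sqrt ((univ.filter fun n => c n = i).card : ℝ) := by
  classical
  haveI : Nonempty {g : Fin K → ℝ // ∀ i, |g i| ≤ B} :=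
    ⟨⟨fun _ => 0, fun i => by simpa using hB⟩⟩
  set G := {g : Fin K → ℝ // ∀ i, |g i| ≤ B} with hG
  set t : Fin N → G → ℝ := fun n g => radR (y n) * g.1 (c n) with htdef
  have ht : ∀ n g, |t n g| ≤ B := fun n g => by
    rw [htdef]; simp only
    rw [abs_mul, radR_abs, one_mul]; exact g.2 (c n)
  have hlam : (0:ℝ) ≤ (lam : ℝ) := lam.2
  have hlip : ∀ x z, |Λ x - Λ z| ≤ (lam : ℝ) * |x - z| := fun x z => by
    have := hΛ.dist_le_mul x z
    rwa [Real.dist_eq, Real.dist_eq] at this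
  -- abbreviations
  set s : Fin K → (Fin N → Bool) → ℝ :=
    fun i σ => ∑ n ∈ univ.filter fun n => c n = i, radR (σ n) * radR (y n) with hsdef
  -- Hölder step
  have holder : ∀ σ : Fin N → Bool,
      (⨆ g : G, ∑ n, radR (σ n) * ((lam : ℝ) * t n g))
        ≤ (lam : ℝ) * B * ∑ i, |s i σ| := by
    intro σ
    apply ciSup_le
    intro g
    have e1 : ∑ n, radR (σ n) * ((lam : ℝ) * t n g)
        = (lam : ℝ) * ∑ n, (radR (σ n) * radR (y n)) * g.1 (c n) := by
      rw [Finset.mul_sum]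
      exact Finset.sum_congr rfl fun n _ => by rw [htdef]; ring
    have e2 : ∑ n, (radR (σ n) * radR (y n)) * g.1 (c n)
        = ∑ i, ∑ n ∈ univ.filter fun n => c n = i, (radR (σ n) * radR (y n)) * g.1 (c n) :=
      (Finset.sum_fiberwise_of_maps_to (fun n _ => Finset.mem_univ (c n)) _).symm
    have e3 : ∀ i : Fin K,
        ∑ n ∈ univ.filter fun n => c n = i, (radR (σ n) * radR (y n)) * g.1 (c n)
          = s i σ * g.1 i := by
      intro i
      rw [hsdef]; simp only
      rw [Finset.sum_mul]
      exact Finset.sum_congr rfl fun n hn => by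
        rw [(Finset.mem_filter.1 hn).2]
    have bound : ∑ i, s i σ * g.1 i ≤ ∑ i, |s i σ| * B := by
      apply Finset.sum_le_sum
      intro i _
      calc s i σ * g.1 i ≤ |s i σ * g.1 i| := le_abs_self _
        _ = |s i σ| * |g.1 i| := abs_mul _ _
        _ ≤ |s i σ| * B := mul_le_mul_of_nonneg_left (g.2 i) (abs_nonneg _)
    calc ∑ n, radR (σ n) * ((lam : ℝ) * t n g)
        = (lam : ℝ) * ∑ i, s i σ * g.1 i := by
          rw [e1, e2]
          congr 1
          exact Finset.sum_congr rfl fun i _ => e3 i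
      _ ≤ (lam : ℝ) * ∑ i, |s i σ| * B := mul_le_mul_of_nonneg_left bound hlam
      _ = (lam : ℝ) * B * ∑ i, |s i σ| := by rw [← Finset.sum_mul]; ring
  -- expectation of eps-sums
  have expabs : ∀ i : Fin K,
      ∑ σ : Fin N → Bool, |s i σ|
        ≤ 2 ^ N * Real.sqrt ((univ.filter fun n => c n = i).card : ℝ) := by
    intro i
    exact rad_abs_sum (univ.filter fun n => c n = i) (fun n => radR (y n))
      (fun n => radR_mul_self (y n))
  -- combine
  have core : ∑ σ : Fin N → Bool, (⨆ g : G, ∑ n, radR (σ n) * Λ (t n g))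
      ≤ 2 ^ N * ((lam : ℝ) * B *
          ∑ i : Fin K, Real.sqrt ((univ.filter fun n => c n = i).card : ℝ)) := by
    calc ∑ σ : Fin N → Bool, (⨆ g : G, ∑ n, radR (σ n) * Λ (t n g))
        ≤ ∑ σ : Fin N → Bool, ⨆ g : G, ∑ n, radR (σ n) * ((lam : ℝ) * t n g) :=
          contraction_main t Λ (lam : ℝ) hlam hlip B hB ht
      _ ≤ ∑ σ : Fin N → Bool, (lam : ℝ) * B * ∑ i, |s i σ| :=
          Finset.sum_le_sum fun σ _ => holder σ
      _ = (lam : ℝ) * B * ∑ i, ∑ σ : Fin N → Bool, |s i σ| := by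
          rw [← Finset.mul_sum, Finset.sum_comm]
      _ ≤ (lam : ℝ) * B * ∑ i : Fin K,
            2 ^ N * Real.sqrt ((univ.filter fun n => c n = i).card : ℝ) := by
          apply mul_le_mul_of_nonneg_left _ (by positivity)
          exact Finset.sum_le_sum fun i _ => expabs i
      _ = 2 ^ N * ((lam : ℝ) * B *
            ∑ i : Fin K, Real.sqrt ((univ.filter fun n => c n = i).card : ℝ)) := by
          rw [← Finset.mul_sum]; ring
  -- pull out 1/N
  have pull : ∀ σ : Fin N → Bool,
      (⨆ g : G, (1 / N : ℝ) * ∑ n, radR (σ n) * Λ (radR (y n) * g.1 (c n)))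
        = (1 / N : ℝ) * ⨆ g : G, ∑ n, radR (σ n) * Λ (t n g) := by
    intro σ
    rw [Real.mul_iSup_of_nonneg (by positivity)]
  rw [Finset.sum_congr rfl fun σ _ => pull σ, ← Finset.mul_sum]
  have hNpos : (0:ℝ) < N := by exact_mod_cast hN
  have h2N : (0:ℝ) < 2 ^ N := by positivity
  calc ((2 : ℝ) ^ N)⁻¹ * ((1 / N : ℝ) * ∑ σ : Fin N → Bool, ⨆ g : G, ∑ n, radR (σ n) * Λ (t n g))
      ≤ ((2 : ℝ) ^ N)⁻¹ * ((1 / N : ℝ) * (2 ^ N * ((lam : ℝ) * B *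
          ∑ i : Fin K, Real.sqrt ((univ.filter fun n => c n = i).card : ℝ)))) := by
        apply mul_le_mul_of_nonneg_left _ (by positivity)
        exact mul_le_mul_of_nonneg_left core (by positivity)
    _ = ((lam : ℝ) * B / N) *
          ∑ i : Fin K, Real.sqrt ((univ.filter fun n => c n = i).card : ℝ) := by
        rw [inv_mul_eq_iff_eq_mul₀ h2N.ne']; ring
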